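/- Let H be a complex Hilbert space, U a strongly continuous unitary representation of ℝ^d on H, v₀ ∈ H with ‖v₀‖ = 1, and μ₀ a Borel probability measure on ℝ^d such that ⟨v₀, U(ξ)v₀⟩_H = ∫ e^{2πi ξ·g} dμ₀(g) for all ξ ∈ ℝ^d. Let ψ : ℝ^d → ℂ be continuous with compact support and such that its Fourier transform ψ̂(ξ) = ∫ e^{-2πi ξ·g} ψ(g) dg is Lebesgue integrable. Then for every γ ∈ ℝ^d, ⟨∫_{ℝ^d} ψ̂(ξ) U(ξ)v₀ dξ, U(γ)v₀⟩_H = ∫ e^{2πi γ·g} \overline{ψ(g)} dμ₀(g), where the left-hand integral is a Bochner integral with respect to Lebesgue measure. -/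

import Mathlib

open MeasureTheory Real
open scoped InnerProductSpace RealInnerProductSpace FourierTransform

/-- Let `U` be a strongly continuous unitary representation of `ℝ^d` on a complex Hilbert
space `H`, `v₀` a unit vector, and `μ₀` a Borel probability measure on `ℝ^d` such that
`⟨v₀, U(ξ)v₀⟩ = ∫ e^{2πi ξ·g} dμ₀(g)` for all `ξ`.  If `ψ : ℝ^d → ℂ` is continuous with
compact support and its Fourier transform `ψ̂(ξ) = ∫ e^{-2πi ξ·g} ψ(g) dg` is Lebesgue
integrable, then for every `γ ∈ ℝ^d`,
`⟨∫ ψ̂(ξ) U(ξ)v₀ dξ, U(γ)v₀⟩ = ∫ e^{2πi γ·g} conj(ψ(g)) dμ₀(g)`. -/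
theorem inner_integral_fourierTransform_smul_wandering {d : ℕ} {H : Type*}
    [NormedAddCommGroup H] [InnerProductSpace ℂ H] [CompleteSpace H]
    (U : EuclideanSpace ℝ (Fin d) → (H ≃ₗᵢ[ℂ] H))
    (hUadd : ∀ s t : EuclideanSpace ℝ (Fin d), U (s + t) = U s * U t)
    (hUcont : ∀ v : H, Continuous fun t : EuclideanSpace ℝ (Fin d) => U t v)
    (v₀ : H) (hv₀ : ‖v₀‖ = 1)
    (μ₀ : Measure (EuclideanSpace ℝ (Fin d))) [IsProbabilityMeasure μ₀]
    (hμ₀ : ∀ ξ : EuclideanSpace ℝ (Fin d),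
      ⟪v₀, U ξ v₀⟫_ℂ = ∫ g, Complex.exp (2 * π * Complex.I * (⟪ξ, g⟫_ℝ : ℂ)) ∂μ₀)
    (ψ : EuclideanSpace ℝ (Fin d) → ℂ) (hψc : Continuous ψ) (hψs : HasCompactSupport ψ)
    (hψhat : Integrable fun ξ : EuclideanSpace ℝ (Fin d) =>
      ∫ g, Complex.exp (-(2 * π * Complex.I * (⟪ξ, g⟫_ℝ : ℂ))) * ψ g)
    (γ : EuclideanSpace ℝ (Fin d)) :
    ⟪∫ ξ, (∫ g, Complex.exp (-(2 * π * Complex.I * (⟪ξ, g⟫_ℝ : ℂ))) * ψ g) • (U ξ v₀),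
        U γ v₀⟫_ℂ =
      ∫ g, Complex.exp (2 * π * Complex.I * (⟪γ, g⟫_ℝ : ℂ)) * (starRingEnd ℂ) (ψ g) ∂μ₀ := by
  -- identify the inner integral with the Fourier transform
  have hFdef : ∀ ξ : EuclideanSpace ℝ (Fin d),
      (∫ g, Complex.exp (-(2 * π * Complex.I * (⟪ξ, g⟫_ℝ : ℂ))) * ψ g) = 𝓕 ψ ξ := by
    intro ξ
    rw [Real.fourier_eq']
    refine integral_congr_ae (Filter.Eventually.of_forall fun v => ?_)
    simp only [smul_eq_mul]
    congr 1
    rw [real_inner_comm v ξ]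
    push_cast
    ring
  have hψint : Integrable ψ := hψc.integrable_of_hasCompactSupport hψs
  have h𝓕 : Integrable (𝓕 ψ) := by
    have : (fun ξ : EuclideanSpace ℝ (Fin d) =>
        ∫ g, Complex.exp (-(2 * π * Complex.I * (⟪ξ, g⟫_ℝ : ℂ))) * ψ g) = 𝓕 ψ :=
      funext hFdef
    rwa [this] at hψhat
  -- Fourier inversion
  have hinv : ∀ g : EuclideanSpace ℝ (Fin d),
      (∫ ξ, (𝓕 ψ) ξ * Complex.exp (2 * π * Complex.I * (⟪ξ, g⟫_ℝ : ℂ))) = ψ g := by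
    intro g
    have h := congrFun (hψc.fourierInv_fourier_eq hψint h𝓕) g
    rw [Real.fourierInv_eq'] at h
    rw [← h]
    refine integral_congr_ae (Filter.Eventually.of_forall fun v => ?_)
    simp only [smul_eq_mul]
    push_cast
    ring
  -- integrability of the vector-valued integrand
  have hint : Integrable (fun ξ : EuclideanSpace ℝ (Fin d) => (𝓕 ψ) ξ • (U ξ v₀)) := by
    refine Integrable.mono' h𝓕.norm
      (h𝓕.aestronglyMeasurable.smul (hUcont v₀).aestronglyMeasurable)
      (Filter.Eventually.of_forall fun ξ => ?_)
    rw [norm_smul, (U ξ).norm_map, hv₀, mul_one]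
  simp only [hFdef]
  -- move inner product inside the integral
  have step1 : ⟪∫ ξ, (𝓕 ψ) ξ • (U ξ v₀), U γ v₀⟫_ℂ
      = ∫ ξ, ⟪(𝓕 ψ) ξ • (U ξ v₀), U γ v₀⟫_ℂ := by
    rw [← inner_conj_symm, ← integral_inner hint, ← integral_conj]
    exact integral_congr_ae (Filter.Eventually.of_forall fun ξ => (inner_conj_symm _ _))
  rw [step1]
  -- compute the inner product pointwise
  have step2 : ∀ ξ : EuclideanSpace ℝ (Fin d),
      ⟪(𝓕 ψ) ξ • (U ξ v₀), U γ v₀⟫_ℂ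
        = ∫ g, (starRingEnd ℂ) ((𝓕 ψ) ξ) *
            Complex.exp (2 * π * Complex.I * (⟪γ - ξ, g⟫_ℝ : ℂ)) ∂μ₀ := by
    intro ξ
    have hU : U γ v₀ = U ξ (U (γ - ξ) v₀) := by
      have h := hUadd ξ (γ - ξ)
      rw [add_sub_cancel] at h
      rw [h]
      rfl
    rw [inner_smul_left, hU, LinearIsometryEquiv.inner_map_map, hμ₀ (γ - ξ),
      ← integral_const_mul]
  simp only [step2]
  -- Fubini
  have hK : Integrable (Function.uncurry fun ξ g =>
      (starRingEnd ℂ) ((𝓕 ψ) ξ) * Complex.exp (2 * π * Complex.I * (⟪γ - ξ, g⟫_ℝ : ℂ)))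
      (volume.prod μ₀) := by
    have hmeas : AEStronglyMeasurable (Function.uncurry fun ξ g =>
        (starRingEnd ℂ) ((𝓕 ψ) ξ) * Complex.exp (2 * π * Complex.I * (⟪γ - ξ, g⟫_ℝ : ℂ)))
        (volume.prod μ₀) := by
      refine AEStronglyMeasurable.mul ?_ ?_
      · exact ((Complex.continuous_conj.comp_aestronglyMeasurable
          h𝓕.aestronglyMeasurable).comp_fst)
      · refine Continuous.aestronglyMeasurable ?_
        refine Complex.continuous_exp.comp ?_
        refine (continuous_const.mul ?_)
        exact Complex.continuous_ofReal.comp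
          ((continuous_const.sub continuous_fst).inner continuous_snd)
    refine Integrable.mono' (h𝓕.norm.mul_prod (integrable_const (1:ℝ))) hmeas
      (Filter.Eventually.of_forall fun p => ?_)
    rw [Function.uncurry]
    rw [norm_mul, RCLike.norm_conj]
    have : ‖Complex.exp (2 * π * Complex.I * (⟪γ - p.1, p.2⟫_ℝ : ℂ))‖ = 1 := by
      rw [Complex.norm_exp]
      norm_num
    rw [this]
  rw [integral_integral_swap hK]
  refine integral_congr_ae (Filter.Eventually.of_forall fun g => ?_)
  -- compute the inner ξ-integral
  have : ∀ ξ : EuclideanSpace ℝ (Fin d),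
      (starRingEnd ℂ) ((𝓕 ψ) ξ) * Complex.exp (2 * π * Complex.I * (⟪γ - ξ, g⟫_ℝ : ℂ))
        = Complex.exp (2 * π * Complex.I * (⟪γ, g⟫_ℝ : ℂ)) *
            (starRingEnd ℂ) ((𝓕 ψ) ξ * Complex.exp (2 * π * Complex.I * (⟪ξ, g⟫_ℝ : ℂ))) := by
    intro ξ
    rw [inner_sub_left, map_mul, ← Complex.exp_conj]
    have : (starRingEnd ℂ) (2 * π * Complex.I * (⟪ξ, g⟫_ℝ : ℂ))
        = -(2 * π * Complex.I * (⟪ξ, g⟫_ℝ : ℂ)) := by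
      simp [Complex.ext_iff, Complex.conj_re, Complex.conj_im]
    rw [this]
    push_cast
    rw [mul_sub, Complex.exp_sub, Complex.exp_neg, div_eq_mul_inv]
    ring
  simp only [this]
  rw [integral_const_mul, integral_conj, hinv g]
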